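/- Let ψ = (a, 1-a) and φ = (b, 1-b) with 1/2 < a < b ≤ 1, and let χ = (p, 1-p) with 1/2 < p < 1. Then ψ ⊗ χ ≺ φ ⊗ (1/2, 1/2) holds if and only if p ≤ b/(2a). -/

import Mathlib

open Finset

/-- `eSum v m` is the sum of the `m` largest entries of `v`
(the supremum of sums over subsets of cardinality `m`). -/
noncomputable def eSum {ι : Type} [Fintype ι] (v : ι → ℝ) (m : ℕ) : ℝ :=
  sSup {x | ∃ s : Finset ι, s.card = m ∧ x = ∑ i ∈ s, v i}

/-- Majorization `x ≺ y`: partial sums of largest entries of `x` are dominated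
by those of `y`, with equal total sums. -/
def Maj {ι κ : Type} [Fintype ι] [Fintype κ] (x : ι → ℝ) (y : κ → ℝ) : Prop :=
  (∀ m : ℕ, 1 ≤ m → m < Fintype.card ι → eSum x m ≤ eSum y m) ∧
    ∑ i, x i = ∑ j, y j

/-- Strict majorization `x ◁ y`: all inequalities strict, total sums equal. -/
def SMaj {ι κ : Type} [Fintype ι] [Fintype κ] (x : ι → ℝ) (y : κ → ℝ) : Prop :=
  (∀ m : ℕ, 1 ≤ m → m < Fintype.card ι → eSum x m < eSum y m) ∧
    ∑ i, x i = ∑ j, y j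

/-- Global uniformity: smallest entry divided by largest entry. -/
noncomputable def gu {ι : Type} [Fintype ι] (v : ι → ℝ) : ℝ :=
  sInf (Set.range v) / sSup (Set.range v)

/-- The set of ratios `v b / v a` over consecutive distinct values `v b < v a`
(no value strictly in between). -/
def ratioSet {ι : Type} [Fintype ι] (v : ι → ℝ) : Set ℝ :=
  {r | ∃ a b : ι, v b < v a ∧ (¬ ∃ c : ι, v b < v c ∧ v c < v a) ∧ r = v b / v a}

open Classical in
noncomputable def lu {ι : Type} [Fintype ι] (v : ι → ℝ) : ℝ :=
  if (∃ a b : ι, v a ≠ v b) then sInf (ratioSet v) else 1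

open Classical in
/-- Maximal local uniformity: maximum ratio of consecutive distinct values;
`1` for a constant vector. -/
noncomputable def Lu {ι : Type} [Fintype ι] (v : ι → ℝ) : ℝ :=
  if (∃ a b : ι, v a ≠ v b) then sSup (ratioSet v) else 1

/-- Tensor (Kronecker) product of two vectors. -/
def tens {ι κ : Type} (x : ι → ℝ) (y : κ → ℝ) : ι × κ → ℝ :=
  fun p => x p.1 * y p.2

/-- `k`-fold tensor power of a vector. -/
def tpow {n : ℕ} (v : Fin n → ℝ) (k : ℕ) : (Fin k → Fin n) → ℝ :=
  fun f => ∏ i, v (f i)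

/-- A probability vector: nonnegative entries summing to one. -/
def IsProb {ι : Type} [Fintype ι] (v : ι → ℝ) : Prop :=
  (∀ i, 0 ≤ v i) ∧ ∑ i, v i = 1

/-- `v` sorted in non-increasing order. -/
noncomputable def sortDesc {n : ℕ} (v : Fin n → ℝ) : Fin n → ℝ :=
  fun i => v (Tuple.sort v i.rev)

/-- Shannon entropy (base 2), with the convention `0 log 0 = 0`. -/
noncomputable def entH {ι : Type} [Fintype ι] (v : ι → ℝ) : ℝ :=
  -∑ i, v i * Real.logb 2 (v i)



lemma le_eSum' {ι : Type} [Fintype ι] (v : ι → ℝ) (m : ℕ) (s : Finset ι)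
    (hs : s.card = m) : ∑ i ∈ s, v i ≤ eSum v m := by
  apply le_csSup
  · have hset : {x | ∃ s : Finset ι, s.card = m ∧ x = ∑ i ∈ s, v i}
        = ↑((Finset.univ.powersetCard m).image fun s => ∑ i ∈ s, v i) := by
      ext x
      simp [Finset.mem_powersetCard, eq_comm]
    rw [hset]
    exact (Finset.finite_toSet _).bddAbove
  · exact ⟨s, hs, rfl⟩

lemma eSum_le' {ι : Type} [Fintype ι] (v : ι → ℝ) (m : ℕ) (c : ℝ)
    (hm : m ≤ Fintype.card ι)
    (h : ∀ s : Finset ι, s.card = m → ∑ i ∈ s, v i ≤ c) : eSum v m ≤ c := by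
  obtain ⟨s, -, hs⟩ := Finset.exists_subset_card_eq
    (show m ≤ (Finset.univ : Finset ι).card by simpa using hm)
  unfold eSum
  refine csSup_le ⟨∑ i ∈ s, v i, s, hs, rfl⟩ ?_
  rintro t ⟨u, hu, rfl⟩
  exact h u hu


section auxBell
variable {a b p : ℝ}

private lemma bell_aux_single (ha : 1 / 2 < a) (hab : a < b) (hb : b ≤ 1)
    (hp1 : 1 / 2 < p) (hp2 : p < 1) (hb2 : 2 * a * p ≤ b) (i : Fin 2 × Fin 2) :
    tens (fun i : Fin 2 => if i = 0 then a else 1 - a)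
      (fun i : Fin 2 => if i = 0 then p else 1 - p) i ≤ b / 2 := by
  fin_cases i <;> simp [tens] <;> nlinarith

private lemma bell_aux_pair (ha : 1 / 2 < a) (hab : a < b) (hb : b ≤ 1)
    (hp1 : 1 / 2 < p) (hp2 : p < 1) (hb2 : 2 * a * p ≤ b)
    (i j : Fin 2 × Fin 2) (hij : i ≠ j) :
    tens (fun i : Fin 2 => if i = 0 then a else 1 - a)
        (fun i : Fin 2 => if i = 0 then p else 1 - p) i +
      tens (fun i : Fin 2 => if i = 0 then a else 1 - a)
        (fun i : Fin 2 => if i = 0 then p else 1 - p) j ≤ b := by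
  fin_cases i <;> fin_cases j <;> simp_all [tens] <;> nlinarith

private lemma bell_aux_low (ha : 1 / 2 < a) (hab : a < b) (hb : b ≤ 1)
    (hp1 : 1 / 2 < p) (hp2 : p < 1) (hb2 : 2 * a * p ≤ b) (j : Fin 2 × Fin 2) :
    (1 - b) / 2 ≤ tens (fun i : Fin 2 => if i = 0 then a else 1 - a)
      (fun i : Fin 2 => if i = 0 then p else 1 - p) j := by
  fin_cases j <;> simp [tens] <;> nlinarith

end auxBell

/-- for `ψ = (a,1-a)`, `φ = (b,1-b)`, `χ = (p,1-p)` with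
`1/2 < a < b ≤ 1` and `1/2 < p < 1`, we have
`ψ ⊗ χ ≺ φ ⊗ (1/2,1/2)` iff `p ≤ b/(2a)`. -/
theorem bell_concentration_iff (a b p : ℝ)
    (ha : 1 / 2 < a) (hab : a < b) (hb : b ≤ 1)
    (hp1 : 1 / 2 < p) (hp2 : p < 1) :
    Maj (tens (fun i : Fin 2 => if i = 0 then a else 1 - a)
          (fun i : Fin 2 => if i = 0 then p else 1 - p))
        (tens (fun i : Fin 2 => if i = 0 then b else 1 - b)
          (fun _ : Fin 2 => (1 : ℝ) / 2)) ↔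
      p ≤ b / (2 * a) := by
  set x : Fin 2 × Fin 2 → ℝ := tens (fun i : Fin 2 => if i = 0 then a else 1 - a)
      (fun i : Fin 2 => if i = 0 then p else 1 - p) with hx
  set y : Fin 2 × Fin 2 → ℝ := tens (fun i : Fin 2 => if i = 0 then b else 1 - b)
      (fun _ : Fin 2 => (1 : ℝ) / 2) with hy
  have hcard : Fintype.card (Fin 2 × Fin 2) = 4 := by simp
  have ha0 : (0:ℝ) < a := by linarith
  have hsumx : ∑ i, x i = 1 := by
    simp [hx, tens, Fintype.sum_prod_type, Fin.sum_univ_two]; ring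
  have hsumy : ∑ i, y i = 1 := by
    simp [hy, tens, Fintype.sum_prod_type, Fin.sum_univ_two]; ring
  constructor
  · rintro ⟨hmaj, -⟩
    have h1 := hmaj 1 le_rfl (by rw [hcard]; norm_num)
    have hxl : a * p ≤ eSum x 1 := by
      have := le_eSum' x 1 {((0 : Fin 2), (0 : Fin 2))} rfl
      simpa [hx, tens] using this
    have hyu : eSum y 1 ≤ b / 2 := by
      apply eSum_le' y 1 (b/2) (by rw [hcard]; norm_num)
      intro s hs
      obtain ⟨i, rfl⟩ := Finset.card_eq_one.mp hs
      rw [Finset.sum_singleton]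
      fin_cases i <;> simp [hy, tens] <;> nlinarith
    rw [le_div_iff₀ (by linarith : (0:ℝ) < 2 * a)]
    nlinarith
  · intro hpb
    have hb2 : 2 * a * p ≤ b := by
      rw [le_div_iff₀ (by linarith : (0:ℝ) < 2 * a)] at hpb
      linarith
    refine ⟨?_, by rw [hsumx, hsumy]⟩
    intro m hm1 hm2
    rw [hcard] at hm2
    interval_cases m
    · -- m = 1
      have hyl : b / 2 ≤ eSum y 1 := by
        have := le_eSum' y 1 {((0 : Fin 2), (0 : Fin 2))} rfl
        simpa [hy, tens, div_eq_mul_inv] using this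
      have hxu : eSum x 1 ≤ b / 2 := by
        apply eSum_le' x 1 (b/2) (by rw [hcard]; norm_num)
        intro s hs
        obtain ⟨i, rfl⟩ := Finset.card_eq_one.mp hs
        rw [Finset.sum_singleton, hx]
        exact bell_aux_single ha hab hb hp1 hp2 hb2 i
      linarith
    · -- m = 2
      have hyl : b ≤ eSum y 2 := by
        have hcard2 : ({((0:Fin 2),(0:Fin 2)), ((0:Fin 2),(1:Fin 2))} : Finset (Fin 2 × Fin 2)).card = 2 := by decide
        have := le_eSum' y 2 {((0:Fin 2),(0:Fin 2)), ((0:Fin 2),(1:Fin 2))} hcard2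
        rw [Finset.sum_pair (by decide)] at this
        have hv : y ((0:Fin 2),(0:Fin 2)) + y ((0:Fin 2),(1:Fin 2)) = b := by
          simp [hy, tens]; ring
        linarith [this, hv.symm.le]
      have hxu : eSum x 2 ≤ b := by
        apply eSum_le' x 2 b (by rw [hcard]; norm_num)
        intro s hs
        obtain ⟨i, j, hij, rfl⟩ := Finset.card_eq_two.mp hs
        rw [Finset.sum_pair hij, hx]
        exact bell_aux_pair ha hab hb hp1 hp2 hb2 i j hij
      linarith
    · -- m = 3
      have hyl : (1 + b) / 2 ≤ eSum y 3 := by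
        have hcard3 : ({((0:Fin 2),(0:Fin 2)), ((0:Fin 2),(1:Fin 2)), ((1:Fin 2),(0:Fin 2))} : Finset (Fin 2 × Fin 2)).card = 3 := by decide
        have := le_eSum' y 3 _ hcard3
        have hv : ∑ i ∈ ({((0:Fin 2),(0:Fin 2)), ((0:Fin 2),(1:Fin 2)), ((1:Fin 2),(0:Fin 2))} : Finset (Fin 2 × Fin 2)), y i = (1 + b) / 2 := by
          rw [show ({((0:Fin 2),(0:Fin 2)), ((0:Fin 2),(1:Fin 2)), ((1:Fin 2),(0:Fin 2))} : Finset (Fin 2 × Fin 2)) = insert ((0:Fin 2),(0:Fin 2)) (insert ((0:Fin 2),(1:Fin 2)) {((1:Fin 2),(0:Fin 2))}) from rfl]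
          rw [Finset.sum_insert (by decide), Finset.sum_insert (by decide), Finset.sum_singleton]
          simp [hy, tens]; ring
        linarith
      have hxu : eSum x 3 ≤ (1 + b) / 2 := by
        apply eSum_le' x 3 ((1+b)/2) (by rw [hcard]; norm_num)
        intro s hs
        have hsc : sᶜ.card = 1 := by
          rw [Finset.card_compl, hs, hcard]
        obtain ⟨j, hj⟩ := Finset.card_eq_one.mp hsc
        have hsum : ∑ i ∈ sᶜ, x i + ∑ i ∈ s, x i = ∑ i, x i := Finset.sum_compl_add_sum s x
        rw [hj, Finset.sum_singleton, hsumx] at hsum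
        have hjge : (1 - b) / 2 ≤ x j := by
          rw [hx]; exact bell_aux_low ha hab hb hp1 hp2 hb2 j
        linarith
      linarith
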